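/- Let G₃ be a simple undirected graph on m ≤ n vertices, G₂ a simple undirected graph on n vertices, C the n×n adjacency matrix of G₃ extended by n−m isolated vertices, and B the adjacency matrix of G₂. Then G₃ is isomorphic to a subgraph of G₂ if and only if there exists Z ∈ Ψ_{n,n} with Z·vec(C + 2^{n²} I_n) ≤ vec(B + 2^{n²} I_n) entrywise. -/

import Mathlib

open Matrix Kronecker Finset

/-- `Ψ_{m,n}`: the convex hull of Kronecker products of permutation matrices. -/
def Psi (m n : ℕ) : Set (Matrix (Fin m × Fin n) (Fin m × Fin n) ℝ) :=
  convexHull ℝ {C | ∃ σ : Equiv.Perm (Fin m), ∃ τ : Equiv.Perm (Fin n),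
    C = (σ.permMatrix ℝ) ⊗ₖ (τ.permMatrix ℝ)}

/-- `vec`: stacking the columns of a square matrix. -/
def vec (n : ℕ) (M : Matrix (Fin n) (Fin n) ℝ) : Fin n × Fin n → ℝ :=
  fun p => M p.2 p.1

lemma fact_aux : ∀ n : ℕ, n.factorial * n.factorial * 2^(2*n) ≤ 2^(n^2 + n) := by
  intro n
  induction n with
  | zero => simp
  | succ k ih =>
    have hk : (k+1) ≤ 2^k := Nat.succ_le_of_lt (Nat.lt_two_pow_self (n := k))
    have h2 : (k+1)*(k+1) ≤ 2^k * 2^k := Nat.mul_le_mul hk hk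
    have e1 : (k+1).factorial * (k+1).factorial * 2^(2*(k+1))
        = ((k+1)*(k+1)) * 4 * (k.factorial * k.factorial * 2^(2*k)) := by
      rw [Nat.factorial_succ]
      ring_nf
    calc (k+1).factorial * (k+1).factorial * 2^(2*(k+1))
        = ((k+1)*(k+1)) * 4 * (k.factorial * k.factorial * 2^(2*k)) := e1
      _ ≤ (2^k * 2^k) * 4 * 2^(k^2+k) := Nat.mul_le_mul (Nat.mul_le_mul h2 le_rfl) ih
      _ = 2^((k+1)^2 + (k+1)) := by
          rw [show (4:ℕ) = 2^2 by norm_num, ← pow_add, ← pow_add, ← pow_add]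
          congr 1
          ring

lemma fact_sq_lt (n : ℕ) (hn : 0 < n) : n.factorial * n.factorial < 2^(n^2) := by
  have h := fact_aux n
  have h2 : (2:ℕ)^(n^2+n) < 2^(n^2) * 2^(2*n) := by
    rw [← pow_add]
    exact Nat.pow_lt_pow_right one_lt_two (by omega)
  exact Nat.lt_of_mul_lt_mul_right (lt_of_le_of_lt h h2)

lemma exists_perm_comp {α β : Type*} [Fintype α] [Fintype β] [DecidableEq α] [DecidableEq β]
    (e₁ e₂ : α ↪ β) : ∃ g : Equiv.Perm β, ∀ a, g (e₁ a) = e₂ a := by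
  classical
  have h1 : Fintype.card (Set.range e₁) = Fintype.card (Set.range e₂) := by
    rw [Set.card_range_of_injective e₁.injective, Set.card_range_of_injective e₂.injective]
  have h2 : Fintype.card (↥(Set.range ⇑e₁)ᶜ) = Fintype.card (↥(Set.range ⇑e₂)ᶜ) := by
    rw [Fintype.card_compl_set, Fintype.card_compl_set, h1]
  obtain ⟨gc⟩ := Fintype.card_eq.mp h2
  refine ⟨(Equiv.Set.sumCompl (Set.range ⇑e₁)).symm.trans
    ((Equiv.sumCongr (e₁.toEquivRange.symm.trans e₂.toEquivRange) gc).trans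
      (Equiv.Set.sumCompl (Set.range ⇑e₂))), fun a => ?_⟩
  simp only [Equiv.trans_apply]
  rw [Equiv.Set.sumCompl_symm_apply_of_mem (Set.mem_range_self a)]
  simp [Function.Embedding.toEquivRange_symm_apply_self, Function.Embedding.toEquivRange_apply,
    Equiv.Set.sumCompl_apply_inl]

lemma permMatrix_apply' {n : ℕ} (σ : Equiv.Perm (Fin n)) (i j : Fin n) :
    σ.permMatrix ℝ i j = if σ i = j then 1 else 0 := by
  simp [Equiv.Perm.permMatrix, PEquiv.toMatrix, Equiv.toPEquiv, Option.mem_def]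

lemma kron_mulVec {n : ℕ} (σ τ : Equiv.Perm (Fin n)) (M : Matrix (Fin n) (Fin n) ℝ)
    (p : Fin n × Fin n) :
    ((σ.permMatrix ℝ) ⊗ₖ (τ.permMatrix ℝ)).mulVec (vec n M) p = M (τ p.2) (σ p.1) := by
  obtain ⟨i, j⟩ := p
  simp only [Matrix.mulVec, dotProduct, Fintype.sum_prod_type, kroneckerMap_apply,
    permMatrix_apply', _root_.vec]
  rw [Finset.sum_eq_single (σ i)]
  · rw [Finset.sum_eq_single (τ j)]
    · simp
    · intro b _ hb; simp [Ne.symm hb]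
    · simp
  · intro b _ hb
    simp [Ne.symm hb]
  · simp

/-- Subgraph isomorphism via linear inequalities: `G₃` (on `m ≤ n` vertices, extended by
`n - m` isolated vertices to get adjacency matrix `C`) is isomorphic to a subgraph of
`G₂` (with adjacency matrix `B`) iff some `Z ∈ Ψ_{n,n}` satisfies
`Z·vec(C + 2^{n²}I) ≤ vec(B + 2^{n²}I)` entrywise. -/
theorem subgraph_iso_iff_lp (m n : ℕ) (hmn : m ≤ n)
    (G₃ : SimpleGraph (Fin m)) [DecidableRel G₃.Adj]
    (G₂ : SimpleGraph (Fin n)) [DecidableRel G₂.Adj]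
    (C : Matrix (Fin n) (Fin n) ℝ)
    (hC : ∀ i j : Fin n, C i j =
      if h : (i : ℕ) < m ∧ (j : ℕ) < m then
        (if G₃.Adj ⟨(i : ℕ), h.1⟩ ⟨(j : ℕ), h.2⟩ then 1 else 0)
      else 0)
    (B : Matrix (Fin n) (Fin n) ℝ) (hB : B = G₂.adjMatrix ℝ) :
    (∃ f : Fin m ↪ Fin n, ∀ a b : Fin m, G₃.Adj a b → G₂.Adj (f a) (f b)) ↔
    (∃ Z ∈ Psi n n, ∀ p : Fin n × Fin n,
      Z.mulVec (vec n (C + ((2 : ℝ) ^ (n ^ 2)) • 1)) p ≤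
        vec n (B + ((2 : ℝ) ^ (n ^ 2)) • 1) p) := by
  classical
  set t : ℝ := (2:ℝ)^(n^2) with ht
  have ht0 : (0:ℝ) < t := by positivity
  set M : Matrix (Fin n) (Fin n) ℝ := C + t • 1 with hMdef
  set N : Matrix (Fin n) (Fin n) ℝ := B + t • 1 with hNdef
  have hM : ∀ a b : Fin n, M a b = C a b + (if a = b then t else 0) := by
    intro a b
    simp [hMdef, Matrix.add_apply, Matrix.smul_apply, Matrix.one_apply, mul_ite]
  have hN : ∀ a b : Fin n, N a b = B a b + (if a = b then t else 0) := by
    intro a b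
    simp [hNdef, Matrix.add_apply, Matrix.smul_apply, Matrix.one_apply, mul_ite]
  have hC0 : ∀ a b : Fin n, 0 ≤ C a b := by
    intro a b; rw [hC]; split_ifs <;> norm_num
  have hCdiag : ∀ a : Fin n, C a a = 0 := by
    intro a; rw [hC]
    split_ifs with h h'
    · exact absurd h' (G₃.irrefl)
    · rfl
    · rfl
  have hB0 : ∀ a b : Fin n, 0 ≤ B a b := by
    intro a b; rw [hB, SimpleGraph.adjMatrix_apply]; split_ifs <;> norm_num
  have hB1 : ∀ a b : Fin n, B a b ≤ 1 := by
    intro a b; rw [hB, SimpleGraph.adjMatrix_apply]; split_ifs <;> norm_num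
  have hM0 : ∀ a b : Fin n, 0 ≤ M a b := by
    intro a b; rw [hM]
    have := hC0 a b
    split_ifs <;> linarith
  constructor
  · rintro ⟨f, hf⟩
    obtain ⟨π, hπ⟩ := exists_perm_comp (Fin.castLEEmb hmn) f
    refine ⟨(π⁻¹.permMatrix ℝ) ⊗ₖ (π⁻¹.permMatrix ℝ),
      subset_convexHull ℝ _ ⟨π⁻¹, π⁻¹, rfl⟩, fun p => ?_⟩
    rw [kron_mulVec]
    show M (π⁻¹ p.2) (π⁻¹ p.1) ≤ N p.2 p.1
    rw [hM, hN]
    have hiff : (π⁻¹ p.2 = π⁻¹ p.1) ↔ (p.2 = p.1) := EmbeddingLike.apply_eq_iff_eq _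
    have hCB : C (π⁻¹ p.2) (π⁻¹ p.1) ≤ B p.2 p.1 := by
      set a := π⁻¹ p.2 with ha
      set b := π⁻¹ p.1 with hb
      have hpa : π a = p.2 := by rw [ha, ← Equiv.Perm.mul_apply, mul_inv_cancel, Equiv.Perm.one_apply]
      have hpb : π b = p.1 := by rw [hb, ← Equiv.Perm.mul_apply, mul_inv_cancel, Equiv.Perm.one_apply]
      rw [hC]
      split_ifs with h h'
      · have hca : Fin.castLE hmn ⟨(a:ℕ), h.1⟩ = a := by ext; rfl
        have hcb : Fin.castLE hmn ⟨(b:ℕ), h.2⟩ = b := by ext; rfl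
        have h2 : G₂.Adj (f ⟨(a:ℕ), h.1⟩) (f ⟨(b:ℕ), h.2⟩) := hf _ _ h'
        have hfa : f ⟨(a:ℕ), h.1⟩ = p.2 := by
          rw [← hπ ⟨(a:ℕ), h.1⟩]; show π (Fin.castLE hmn _) = _; rw [hca, hpa]
        have hfb : f ⟨(b:ℕ), h.2⟩ = p.1 := by
          rw [← hπ ⟨(b:ℕ), h.2⟩]; show π (Fin.castLE hmn _) = _; rw [hcb, hpb]
        rw [hfa, hfb] at h2
        rw [hB, SimpleGraph.adjMatrix_apply, if_pos h2]
      · exact hB0 _ _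
      · exact hB0 _ _
    by_cases hpe : p.2 = p.1
    · rw [if_pos hpe, if_pos (hiff.mpr hpe)]; linarith
    · rw [if_neg hpe, if_neg (fun hh => hpe (hiff.mp hh))]; linarith
  · rintro ⟨Z, hZ, hle⟩
    rcases Nat.eq_zero_or_pos n with hn | hn
    · subst hn
      have hm : m = 0 := Nat.le_zero.mp hmn
      subst hm
      exact ⟨Function.Embedding.ofIsEmpty, fun a => a.elim0⟩
    · rw [Psi, _root_.convexHull_eq] at hZ
      obtain ⟨ι, s, w, z, hw0, hw1, hz, hcm⟩ := hZ
      rw [Finset.centerMass_eq_of_sum_1 _ _ hw1] at hcm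
      -- choose permutation pair for each index
      set kron : Equiv.Perm (Fin n) × Equiv.Perm (Fin n) → Matrix (Fin n × Fin n) (Fin n × Fin n) ℝ :=
        fun q => (q.1.permMatrix ℝ) ⊗ₖ (q.2.permMatrix ℝ) with hkron
      have hgex : ∀ i ∈ s, ∃ q : Equiv.Perm (Fin n) × Equiv.Perm (Fin n), z i = kron q := by
        intro i hi
        obtain ⟨σ, τ, hστ⟩ := hz i hi
        exact ⟨(σ, τ), hστ⟩
      set g : ι → Equiv.Perm (Fin n) × Equiv.Perm (Fin n) :=
        fun i => if h : ∃ q, z i = kron q then h.choose else (1, 1) with hgdef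
      have hg : ∀ i ∈ s, z i = kron (g i) := by
        intro i hi
        obtain ⟨q, hq⟩ := hgex i hi
        have hgi : g i = (⟨q, hq⟩ : ∃ q', z i = kron q').choose := by
          simp only [hgdef]
          exact dif_pos ⟨q, hq⟩
        rw [hgi]
        exact Exists.choose_spec (⟨q, hq⟩ : ∃ q', z i = kron q')
      set W : Equiv.Perm (Fin n) × Equiv.Perm (Fin n) → ℝ :=
        fun q => ∑ i ∈ s.filter (fun i => g i = q), w i with hWdef
      have hWsum : ∑ q : Equiv.Perm (Fin n) × Equiv.Perm (Fin n), W q = 1 := by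
        rw [hWdef]
        rw [Finset.sum_fiberwise s g w]
        exact hw1
      have hcard : (Fintype.card (Equiv.Perm (Fin n) × Equiv.Perm (Fin n)) : ℝ)
          = (n.factorial * n.factorial : ℕ) := by
        simp [Fintype.card_prod, Fintype.card_perm, Fintype.card_fin]
      obtain ⟨q₀, -, hq₀⟩ : ∃ q ∈ (Finset.univ : Finset (Equiv.Perm (Fin n) × Equiv.Perm (Fin n))),
          (1:ℝ)/((n.factorial * n.factorial : ℕ)) ≤ W q := by
        have hne : ((n.factorial * n.factorial : ℕ) : ℝ) ≠ 0 := by positivity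
        apply Finset.exists_le_of_sum_le Finset.univ_nonempty
        rw [hWsum, Finset.sum_const, Finset.card_univ, nsmul_eq_mul, hcard, mul_one_div,
          div_self hne]
      have hfacpos : (0:ℝ) < ((n.factorial * n.factorial : ℕ) : ℝ) := by positivity
      have hWpos : 0 < W q₀ := lt_of_lt_of_le (by positivity) hq₀
      have hbig : 1 < W q₀ * t := by
        have hflt : ((n.factorial * n.factorial : ℕ) : ℝ) < t := by
          rw [ht]
          have := fact_sq_lt n hn
          calc ((n.factorial * n.factorial : ℕ) : ℝ) < ((2^(n^2) : ℕ) : ℝ) := by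
                exact_mod_cast this
            _ = (2:ℝ)^(n^2) := by push_cast; ring
        calc (1:ℝ) = (1/((n.factorial * n.factorial : ℕ) : ℝ)) * ((n.factorial * n.factorial : ℕ) : ℝ) := by
              field_simp
          _ < (1/((n.factorial * n.factorial : ℕ) : ℝ)) * t := by
              apply mul_lt_mul_of_pos_left hflt
              positivity
          _ ≤ W q₀ * t := by
              apply mul_le_mul_of_nonneg_right hq₀ (le_of_lt ht0)
      -- key inequality
      have hkey : ∀ p : Fin n × Fin n, W q₀ * M (q₀.2 p.2) (q₀.1 p.1) ≤ N p.2 p.1 := by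
        intro p
        have h1 : Z.mulVec (vec n M) p = ∑ i ∈ s, w i * ((z i).mulVec (vec n M) p) := by
          rw [← hcm]
          simp only [Matrix.mulVec, dotProduct, Finset.sum_apply, Matrix.sum_apply,
            Matrix.smul_apply, smul_eq_mul, Finset.sum_mul]
          rw [Finset.sum_comm]
          congr 1
          ext i
          rw [Finset.mul_sum]
          congr 1
          ext q
          ring
        have h2 : ∀ i ∈ s, w i * ((z i).mulVec (vec n M) p)
            = w i * M ((g i).2 p.2) ((g i).1 p.1) := by
          intro i hi
          rw [hg i hi, hkron, kron_mulVec]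
        have h3 : W q₀ * M (q₀.2 p.2) (q₀.1 p.1)
            = ∑ i ∈ s.filter (fun i => g i = q₀), w i * M ((g i).2 p.2) ((g i).1 p.1) := by
          rw [hWdef, Finset.sum_mul]
          apply Finset.sum_congr rfl
          intro i hi
          rw [(Finset.mem_filter.mp hi).2]
        have h4 : ∑ i ∈ s.filter (fun i => g i = q₀), w i * M ((g i).2 p.2) ((g i).1 p.1)
            ≤ ∑ i ∈ s, w i * M ((g i).2 p.2) ((g i).1 p.1) := by
          apply Finset.sum_le_sum_of_subset_of_nonneg (Finset.filter_subset _ _)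
          intro i hi _
          exact mul_nonneg (hw0 i hi) (hM0 _ _)
        have h5 : ∑ i ∈ s, w i * M ((g i).2 p.2) ((g i).1 p.1)
            = Z.mulVec (vec n M) p := by
          rw [h1]
          exact (Finset.sum_congr rfl h2).symm
        have h6 := hle p
        calc W q₀ * M (q₀.2 p.2) (q₀.1 p.1)
            = ∑ i ∈ s.filter (fun i => g i = q₀), w i * M ((g i).2 p.2) ((g i).1 p.1) := h3
          _ ≤ ∑ i ∈ s, w i * M ((g i).2 p.2) ((g i).1 p.1) := h4
          _ = Z.mulVec (vec n M) p := h5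
          _ ≤ N p.2 p.1 := h6
      -- step 1 : the two permutations agree
      have hστ : ∀ j : Fin n, q₀.2 j = q₀.1 j := by
        intro j
        by_contra hne
        set i := q₀.1⁻¹ (q₀.2 j) with hi
        have hq1i : q₀.1 i = q₀.2 j := by rw [hi, ← Equiv.Perm.mul_apply, mul_inv_cancel, Equiv.Perm.one_apply]
        have hij : j ≠ i := by
          intro h
          apply hne
          rw [h, hq1i, h]
        have hk := hkey (i, j)
        simp only at hk
        rw [hq1i, hM, hN, hCdiag, if_pos rfl, if_neg hij, zero_add, add_zero] at hk
        have := hB1 j i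
        nlinarith
      -- step 2 : construct the embedding
      have hinj : Function.Injective (fun a : Fin m => q₀.1⁻¹ (Fin.castLE hmn a)) := by
        intro a b hab
        simp only at hab
        have := (EmbeddingLike.apply_eq_iff_eq q₀.1⁻¹).mp hab
        exact Fin.castLE_injective hmn this
      refine ⟨⟨fun a => q₀.1⁻¹ (Fin.castLE hmn a), hinj⟩, fun a b hadj => ?_⟩
      simp only [Function.Embedding.coeFn_mk]
      set j := q₀.1⁻¹ (Fin.castLE hmn a) with hj
      set i := q₀.1⁻¹ (Fin.castLE hmn b) with hi
      have hab : a ≠ b := G₃.ne_of_adj hadj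
      have hcab : Fin.castLE hmn a ≠ Fin.castLE hmn b :=
        fun h => hab (Fin.castLE_injective hmn h)
      have hij : j ≠ i := fun h => hcab ((EmbeddingLike.apply_eq_iff_eq q₀.1⁻¹).mp h)
      have hq1i : q₀.1 i = Fin.castLE hmn b := by rw [hi, ← Equiv.Perm.mul_apply, mul_inv_cancel, Equiv.Perm.one_apply]
      have hq2j : q₀.2 j = Fin.castLE hmn a := by
        rw [hστ j, hj, ← Equiv.Perm.mul_apply, mul_inv_cancel, Equiv.Perm.one_apply]
      have hk := hkey (i, j)
      simp only at hk
      rw [hq1i, hq2j, hM, hN, if_neg hcab, if_neg hij, add_zero, add_zero] at hk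
      have hCval : C (Fin.castLE hmn a) (Fin.castLE hmn b) = 1 := by
        rw [hC]
        have hlt : ((Fin.castLE hmn a : Fin n) : ℕ) < m ∧ ((Fin.castLE hmn b : Fin n) : ℕ) < m :=
          ⟨a.isLt, b.isLt⟩
        rw [dif_pos hlt, if_pos]
        have ha' : (⟨((Fin.castLE hmn a : Fin n) : ℕ), hlt.1⟩ : Fin m) = a := by ext; rfl
        have hb' : (⟨((Fin.castLE hmn b : Fin n) : ℕ), hlt.2⟩ : Fin m) = b := by ext; rfl
        rw [ha', hb']
        exact hadj
      rw [hCval, mul_one] at hk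
      have hBpos : 0 < B j i := lt_of_lt_of_le hWpos hk
      rw [hB, SimpleGraph.adjMatrix_apply] at hBpos
      by_cases hadj2 : G₂.Adj j i
      · exact hadj2
      · rw [if_neg hadj2] at hBpos; norm_num at hBpos
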